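/- arXiv:0904.1119 — 6 statements merged into one kernel-verified Lean document; each statement's English description precedes it below -/
import Mathlib

section
/- Let T > 0, δ > 0, 0 ≤ s ≤ T, and let g : [0,T] → [0,∞) be measurable with ∫_0^T g(t)² dt < ∞. Then ∫_s^T g(t) (δ² + ∫_0^t g(r)² dr)^{−1/2} dt ≤ √T · (log((δ² + ∫_0^T g(r)² dr)/(δ² + ∫_0^s g(r)² dr)))^{1/2}. -/
open MeasureTheory Set

theorem aux_tendsto_n_exp (L : ℝ) : Filter.Tendsto (fun n : ℕ => (n : ℝ) * (Real.exp (L / n) - 1)) Filter.atTop (nhds L) := by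
  have hd : HasDerivAt (fun x : ℝ => Real.exp (L * x)) L 0 := by
    simpa using (((hasDerivAt_id (0:ℝ)).const_mul L).exp)
  rw [hasDerivAt_iff_tendsto_slope] at hd
  have h1 : Filter.Tendsto (fun n : ℕ => ((n : ℝ))⁻¹) Filter.atTop (nhdsWithin 0 {(0:ℝ)}ᶜ) := by
    apply tendsto_nhdsWithin_of_tendsto_nhds_of_eventually_within _ tendsto_inv_atTop_nhds_zero_nat
    filter_upwards [Filter.eventually_atTop.2 ⟨1, fun n hn => hn⟩] with n hn
    simp only [mem_compl_iff, mem_singleton_iff]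
    positivity
  have h2 := hd.comp h1
  refine h2.congr' ?_
  filter_upwards [Filter.eventually_atTop.2 ⟨1, fun n hn => hn⟩] with n hn
  have hn0 : (n : ℝ) ≠ 0 := by positivity
  simp only [Function.comp, slope_def_field, mul_zero, Real.exp_zero, sub_zero, div_eq_mul_inv L]
  rw [div_eq_mul_inv, inv_inv, mul_comm]

/-- An elementary Cauchy–Schwarz / logarithmic-derivative estimate:
`∫_s^T g(t) (δ² + ∫_0^t g²)^{-1/2} dt ≤ √T (log((δ² + ∫_0^T g²)/(δ² + ∫_0^s g²)))^{1/2}`. -/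
theorem cauchy_schwarz_log_estimate (T δ s : ℝ) (hT : 0 < T) (hδ : 0 < δ)
    (hs : 0 ≤ s) (hsT : s ≤ T) (g : ℝ → ℝ) (hg : ∀ t, 0 ≤ g t) (hgm : Measurable g)
    (hint : IntegrableOn (fun t => g t ^ 2) (Icc 0 T)) :
    ∫ t in s..T, g t / Real.sqrt (δ ^ 2 + ∫ r in (0:ℝ)..t, g r ^ 2) ≤
      Real.sqrt T * Real.sqrt (Real.log
        ((δ ^ 2 + ∫ r in (0:ℝ)..T, g r ^ 2) / (δ ^ 2 + ∫ r in (0:ℝ)..s, g r ^ 2))) := by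
  set F : ℝ → ℝ := fun t => δ ^ 2 + ∫ r in (0:ℝ)..t, g r ^ 2 with hF
  -- basic facts about F
  have huIcc : uIcc (0:ℝ) T = Icc 0 T := uIcc_of_le hT.le
  have hgsub : ∀ a b : ℝ, a ∈ Icc (0:ℝ) T → b ∈ Icc (0:ℝ) T →
      IntervalIntegrable (fun t => g t ^ 2) volume a b := by
    intro a b ha hb
    rw [intervalIntegrable_iff]
    exact hint.mono_set (uIoc_subset_uIcc.trans (uIcc_subset_Icc ha hb))
  have hFc : ContinuousOn F (Icc 0 T) := by
    apply continuousOn_const.add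
    have := intervalIntegral.continuousOn_primitive_interval
      (a := (0:ℝ)) (b := T) (f := fun t => g t ^ 2) (μ := volume) (by rwa [huIcc])
    rwa [huIcc] at this
  have hFsub : ∀ a b : ℝ, a ∈ Icc (0:ℝ) T → b ∈ Icc (0:ℝ) T →
      F b - F a = ∫ t in a..b, g t ^ 2 := by
    intro a b ha hb
    have := intervalIntegral.integral_interval_sub_left (a := (0:ℝ)) (b := b) (c := a)
      (hgsub 0 b (left_mem_Icc.2 hT.le) hb) (hgsub 0 a (left_mem_Icc.2 hT.le) ha)
    simp only [hF]
    rw [add_sub_add_left_eq_sub, this]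
  have hFmono : ∀ a b : ℝ, a ∈ Icc (0:ℝ) T → b ∈ Icc (0:ℝ) T → a ≤ b → F a ≤ F b := by
    intro a b ha hb hab
    have h1 : 0 ≤ ∫ t in a..b, g t ^ 2 :=
      intervalIntegral.integral_nonneg hab (fun u _ => sq_nonneg _)
    have := hFsub a b ha hb
    linarith
  have hF0 : F 0 = δ ^ 2 := by simp [hF]
  have hFpos : ∀ t ∈ Icc (0:ℝ) T, δ ^ 2 ≤ F t := by
    intro t ht
    rw [← hF0]
    exact hFmono 0 t (left_mem_Icc.2 hT.le) ht ht.1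
  have hδ2 : (0:ℝ) < δ ^ 2 := by positivity
  -- integrability of g²/F on [0,T]
  have hFae : AEMeasurable F (volume.restrict (Icc (0:ℝ) T)) :=
    hFc.aemeasurable measurableSet_Icc
  have hI2 : IntegrableOn (fun t => g t ^ 2 / F t) (Icc 0 T) := by
    apply Integrable.mono' (hint.div_const (δ ^ 2))
    · exact ((hgm.pow_const 2).aemeasurable.div hFae).aestronglyMeasurable
    · filter_upwards [ae_restrict_mem measurableSet_Icc] with t ht
      rw [Real.norm_eq_abs, abs_of_nonneg (div_nonneg (sq_nonneg _) (hδ2.le.trans (hFpos t ht)))]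
      exact div_le_div_of_nonneg_left (sq_nonneg _) hδ2 (hFpos t ht)
  have hI2sub : ∀ a b : ℝ, a ∈ Icc (0:ℝ) T → b ∈ Icc (0:ℝ) T →
      IntervalIntegrable (fun t => g t ^ 2 / F t) volume a b := by
    intro a b ha hb
    rw [intervalIntegrable_iff]
    exact hI2.mono_set (uIoc_subset_uIcc.trans (uIcc_subset_Icc ha hb))
  -- per-interval bound
  have hIccsub : Icc s T ⊆ Icc (0:ℝ) T := Icc_subset_Icc hs le_rfl
  have perint : ∀ a b : ℝ, a ∈ Icc s T → b ∈ Icc s T → a ≤ b →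
      ∫ t in a..b, g t ^ 2 / F t ≤ (F b - F a) / F a := by
    intro a b ha hb hab
    have ha' := hIccsub ha
    have hb' := hIccsub hb
    have hFa : 0 < F a := hδ2.trans_le (hFpos a ha')
    have h1 : ∫ t in a..b, g t ^ 2 / F t ≤ ∫ t in a..b, g t ^ 2 / F a := by
      apply intervalIntegral.integral_mono_on hab (hI2sub a b ha' hb')
        ((hgsub a b ha' hb').div_const _)
      intro u hu
      have hu' : u ∈ Icc (0:ℝ) T := Icc_subset_Icc ha'.1 hb'.2 hu
      exact div_le_div_of_nonneg_left (sq_nonneg _) hFa (hFmono a u ha' hu' hu.1)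
    rw [intervalIntegral.integral_div, ← hFsub a b ha' hb'] at h1
    exact h1
  -- the key log estimate
  set A := F s with hA
  set B := F T with hB
  have hsmem : s ∈ Icc (0:ℝ) T := ⟨hs, hsT⟩
  have hTmem : T ∈ Icc (0:ℝ) T := right_mem_Icc.2 hT.le
  have hApos : 0 < A := hδ2.trans_le (hFpos s hsmem)
  have hABle : A ≤ B := hFmono s T hsmem hTmem hsT
  have hBpos : 0 < B := hApos.trans_le hABle
  set L := Real.log (B / A) with hL
  have hLnn : 0 ≤ L := Real.log_nonneg ((one_le_div hApos).2 hABle)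
  have key : ∀ n : ℕ, 0 < n → ∫ t in s..T, g t ^ 2 / F t ≤ n * (Real.exp (L / n) - 1) := by
    intro n hn
    set ρ := Real.exp (L / n) with hρ
    have hρ1 : 1 ≤ ρ := Real.one_le_exp (by positivity)
    set c : ℕ → ℝ := fun i => A * ρ ^ i with hc
    have hcmono : Monotone c := fun i j hij => by
      apply mul_le_mul_of_nonneg_left (pow_le_pow_right₀ hρ1 hij) hApos.le
    have hc0 : c 0 = A := by simp [hc]
    have hcn : c n = B := by
      have hexp : ρ ^ n = Real.exp L := by
        rw [hρ, ← Real.exp_nat_mul]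
        congr 1
        field_simp
      show A * ρ ^ n = B
      rw [hexp, hL, Real.exp_log (div_pos hBpos hApos)]
      field_simp
    have hcpos : ∀ i, 0 < c i := fun i => by
      apply mul_pos hApos (pow_pos (lt_of_lt_of_le one_pos hρ1) i)
    -- partition points
    set Sset : ℕ → Set ℝ := fun i => Icc s T ∩ F ⁻¹' (Ici (c i)) with hSset
    have hScl : ∀ i, IsClosed (Sset i) := fun i =>
      (hFc.mono hIccsub).preimage_isClosed_of_isClosed isClosed_Icc isClosed_Ici
    have hSne : ∀ i ≤ n, (Sset i).Nonempty := fun i hi =>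
      ⟨T, ⟨right_mem_Icc.2 hsT, by
        simp only [mem_preimage, mem_Ici, ← hB, ← hcn]
        exact hcmono hi⟩⟩
    have hSbdd : ∀ i, BddBelow (Sset i) := fun i =>
      (bddBelow_Icc : BddBelow (Icc s T)).mono (inter_subset_left)
    set τ : ℕ → ℝ := fun i => sInf (Sset (min i n)) with hτ
    have hτmem : ∀ i ≤ n, τ i ∈ Sset i := by
      intro i hi
      show sInf (Sset (min i n)) ∈ Sset i
      rw [min_eq_left hi]
      exact (hScl i).csInf_mem (hSne _ hi) (hSbdd _)
    have hτIcc : ∀ i ≤ n, τ i ∈ Icc s T := fun i hi => (hτmem i hi).1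
    have hτF : ∀ i ≤ n, F (τ i) = c i := by
      intro i hi
      have hge : c i ≤ F (τ i) := (hτmem i hi).2
      -- IVT gives a point u with F u = c i
      have hIVT := intermediate_value_Icc hsT (hFc.mono hIccsub)
      have hci : c i ∈ Icc (F s) (F T) := by
        constructor
        · rw [← hA, ← hc0]; exact hcmono (Nat.zero_le i)
        · rw [← hB, ← hcn]; exact hcmono hi
      obtain ⟨u, hu, hFu⟩ := hIVT hci
      have hτu : τ i ≤ u := by
        have : u ∈ Sset (min i n) := by
          rw [min_eq_left hi]
          exact ⟨hu, by simp [mem_preimage, hFu]⟩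
        exact csInf_le (hSbdd _) this
      have : F (τ i) ≤ F u := hFmono _ _ (hIccsub (hτIcc i hi)) (hIccsub hu) hτu
      rw [hFu] at this
      exact le_antisymm this hge
    have hτmono : ∀ i j, i ≤ j → τ i ≤ τ j := by
      intro i j hij
      apply csInf_le_csInf (hSbdd _) (hSne _ (min_le_right _ _))
      apply inter_subset_inter_right
      apply preimage_mono
      exact Ici_subset_Ici.2 (hcmono (min_le_min_right n hij))
    have hτ0 : τ 0 = s := by
      have h0n : min 0 n = 0 := min_eq_left (Nat.zero_le n)
      apply le_antisymm
      · show sInf (Sset (min 0 n)) ≤ s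
        rw [h0n]
        apply csInf_le (hSbdd _)
        refine ⟨left_mem_Icc.2 hsT, ?_⟩
        simp only [mem_preimage, mem_Ici, hc0, hA]
        exact le_rfl
      · exact le_csInf (hSne _ (min_le_right _ _)) (fun x hx => hx.1.1)
    -- telescoping
    have htel : ∑ i ∈ Finset.range n, ∫ t in τ i..τ (i+1), g t ^ 2 / F t
        = ∫ t in (τ 0)..(τ n), g t ^ 2 / F t := by
      apply intervalIntegral.sum_integral_adjacent_intervals
      intro k hk
      exact hI2sub _ _ (hIccsub (hτIcc k (le_of_lt hk))) (hIccsub (hτIcc (k+1) hk))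
    have hsplit : ∫ t in s..T, g t ^ 2 / F t
        = (∫ t in (τ 0)..(τ n), g t ^ 2 / F t) + ∫ t in τ n..T, g t ^ 2 / F t := by
      rw [hτ0]
      rw [intervalIntegral.integral_add_adjacent_intervals
        (hI2sub _ _ (hIccsub (left_mem_Icc.2 hsT)) (hIccsub (hτIcc n le_rfl)))
        (hI2sub _ _ (hIccsub (hτIcc n le_rfl)) (hIccsub (right_mem_Icc.2 hsT)))]
    have hlast : ∫ t in τ n..T, g t ^ 2 / F t ≤ 0 := by
      have := perint (τ n) T (hτIcc n le_rfl) (right_mem_Icc.2 hsT) (hτIcc n le_rfl).2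
      rw [hτF n le_rfl, hcn, ← hB] at this
      simpa using this
    have hpieces : ∀ i < n, ∫ t in τ i..τ (i+1), g t ^ 2 / F t ≤ ρ - 1 := by
      intro i hi
      have h1 := perint (τ i) (τ (i+1)) (hτIcc i hi.le) (hτIcc (i+1) hi)
        (hτmono i (i+1) (Nat.le_succ i))
      rw [hτF i hi.le, hτF (i+1) hi] at h1
      have : (c (i+1) - c i) / c i = ρ - 1 := by
        rw [hc]
        field_simp [pow_succ, (hcpos i).ne']
        ring
      rwa [this] at h1
    calc ∫ t in s..T, g t ^ 2 / F t
        ≤ ∫ t in (τ 0)..(τ n), g t ^ 2 / F t := by rw [hsplit]; linarith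
      _ = ∑ i ∈ Finset.range n, ∫ t in τ i..τ (i+1), g t ^ 2 / F t := htel.symm
      _ ≤ ∑ i ∈ Finset.range n, (ρ - 1) := Finset.sum_le_sum (fun i hi => hpieces i (Finset.mem_range.1 hi))
      _ = n * (ρ - 1) := by simp [mul_comm]; ring
  have hI2L : ∫ t in s..T, g t ^ 2 / F t ≤ L := by
    apply ge_of_tendsto (aux_tendsto_n_exp L)
    filter_upwards [Filter.eventually_atTop.2 ⟨1, fun n hn => hn⟩] with n hn
    exact key n hn
  -- Cauchy–Schwarz
  set h : ℝ → ℝ := fun t => g t / Real.sqrt (F t) with hh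
  set μ : Measure ℝ := volume.restrict (Ioc s T) with hμ
  have hsubμ : Ioc s T ⊆ Icc (0:ℝ) T := fun x hx => ⟨hs.trans hx.1.le, hx.2⟩
  have hμle : μ ≤ volume.restrict (Icc (0:ℝ) T) := Measure.restrict_mono hsubμ le_rfl
  have hg2 : MemLp g 2 (volume.restrict (Icc (0:ℝ) T)) :=
    (memLp_two_iff_integrable_sq hgm.aestronglyMeasurable).2 hint
  have hgμ : MemLp g 2 μ := hg2.mono_measure hμle
  have hhsm : AEStronglyMeasurable h μ := by
    apply AEMeasurable.aestronglyMeasurable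
    exact hgm.aemeasurable.div
      ((Real.continuous_sqrt.measurable.comp_aemeasurable (hFae.mono_measure hμle)))
  have hhμ : MemLp h 2 μ := by
    apply (hgμ.const_mul (δ⁻¹)).of_le hhsm
    filter_upwards [ae_restrict_mem measurableSet_Ioc] with t ht
    have hFt : δ ^ 2 ≤ F t := hFpos t (hsubμ ht)
    have hsq : δ ≤ Real.sqrt (F t) := by
      rw [show δ = Real.sqrt (δ ^ 2) by rw [Real.sqrt_sq hδ.le]]
      exact Real.sqrt_le_sqrt hFt
    rw [Real.norm_eq_abs, Real.norm_eq_abs, hh]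
    rw [abs_of_nonneg (div_nonneg (hg t) (Real.sqrt_nonneg _)),
      abs_of_nonneg (mul_nonneg (by positivity) (hg t))]
    rw [div_le_iff₀ (hδ.trans_le hsq), mul_assoc]
    calc g t ≤ δ⁻¹ * g t * δ := by rw [mul_comm _ δ, ← mul_assoc, mul_inv_cancel₀ hδ.ne', one_mul]
      _ ≤ δ⁻¹ * g t * Real.sqrt (F t) := by
          apply mul_le_mul_of_nonneg_left hsq (mul_nonneg (by positivity) (hg t))
      _ = δ⁻¹ * (g t * Real.sqrt (F t)) := mul_assoc _ _ _
  -- Hölder with p = q = 2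
  have hpq : Real.HolderConjugate 2 2 := Real.HolderConjugate.two_two
  have h1μ : MemLp (fun _ : ℝ => (1:ℝ)) (ENNReal.ofReal 2) μ := by
    apply memLp_const
  have hhμ' : MemLp h (ENNReal.ofReal 2) μ := by
    rw [show ENNReal.ofReal 2 = 2 by norm_num]
    exact hhμ
  have hHolder := integral_mul_le_Lp_mul_Lq_of_nonneg hpq
    (f := h) (g := fun _ => (1:ℝ)) (μ := μ)
    (Filter.Eventually.of_forall (fun t => div_nonneg (hg t) (Real.sqrt_nonneg _)))
    (Filter.Eventually.of_forall (fun _ => zero_le_one)) hhμ' h1μ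
  simp only [mul_one, Real.one_rpow] at hHolder
  have hμuniv : ∫ _ : ℝ, (1:ℝ) ∂μ = T - s := by
    rw [hμ, integral_const]
    simp [Real.volume_Ioc, ENNReal.toReal_ofReal (sub_nonneg.2 hsT), hsT]
  rw [hμuniv] at hHolder
  -- identify the LHS
  have hLHS : ∫ t in s..T, g t / Real.sqrt (F t) = ∫ t, h t ∂μ := by
    rw [intervalIntegral.integral_of_le hsT, hμ]
  -- identify ∫ h ^ 2
  have hsq_eq : ∫ t, h t ^ (2:ℝ) ∂μ = ∫ t in s..T, g t ^ 2 / F t := by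
    rw [intervalIntegral.integral_of_le hsT, hμ]
    apply integral_congr_ae
    filter_upwards [ae_restrict_mem measurableSet_Ioc] with t ht
    have hFt : 0 < F t := hδ2.trans_le (hFpos t (hsubμ ht))
    rw [hh]
    rw [show ((2:ℝ)) = ((2:ℕ):ℝ) by norm_num, Real.rpow_natCast]
    rw [div_pow, Real.sq_sqrt hFt.le]
  have hint_nonneg : 0 ≤ ∫ t in s..T, g t ^ 2 / F t := by
    apply intervalIntegral.integral_nonneg hsT
    intro u hu
    exact div_nonneg (sq_nonneg _) ((hδ2.trans_le (hFpos u (hIccsub hu))).le)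
  have hfinal : (∫ t, h t ^ (2:ℝ) ∂μ) ^ ((1:ℝ)/2) * (T - s) ^ ((1:ℝ)/2)
      ≤ Real.sqrt L * Real.sqrt T := by
    rw [hsq_eq]
    rw [← Real.sqrt_eq_rpow, ← Real.sqrt_eq_rpow]
    apply mul_le_mul (Real.sqrt_le_sqrt hI2L) (Real.sqrt_le_sqrt (by linarith))
      (Real.sqrt_nonneg _) (Real.sqrt_nonneg _)
  calc ∫ t in s..T, g t / Real.sqrt (F t) = ∫ t, h t ∂μ := hLHS
    _ ≤ (∫ t, h t ^ (2:ℝ) ∂μ) ^ ((1:ℝ)/2) * (T - s) ^ ((1:ℝ)/2) := hHolder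
    _ ≤ Real.sqrt L * Real.sqrt T := hfinal
    _ = Real.sqrt T * Real.sqrt L := mul_comm _ _
end

section
/- Fix T > 0 and A > 0. There exist constants C > 0 and δ₀ ∈ (0,1), depending only on T and A, with the following property. Let F : ℝ^d → ℝ^d with ‖F‖_{L^∞} ≤ A, let (X,V) and (X^δ,V^δ) be two flow solutions of Newton's system with force F satisfying |V(0,x,v) − V^δ(0,x,v)| ≤ |δ|, and let δ ∈ ℝ^{2d} with 0 < |δ| ≤ δ₀. Then for every (x,v) and every 0 ≤ s ≤ T, ∫_s^T |V(t,x,v) − V^δ(t,x,v)| / √(A_δ(t,x,v)) dt ≤ C (log(1/|δ|))^{1/2}. -/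
open MeasureTheory Set
open scoped BigOperators

noncomputable section

abbrev Euc (d : ℕ) : Type := EuclideanSpace ℝ (Fin d)

/-- `(X, V)` solves Newton's system `∂ₜX = V`, `∂ₜV = F(X)` for every initial
datum `(x, v)` (in the locally absolutely continuous / integral sense). -/
def IsPointwiseFlowSolution (d : ℕ) (F : Euc d → Euc d)
    (X V : ℝ → Euc d → Euc d → Euc d) : Prop :=
  ∀ x v : Euc d,
    (∀ t : ℝ, IntervalIntegrable (fun s => V s x v) volume 0 t) ∧
    (∀ t : ℝ, IntervalIntegrable (fun s => F (X s x v)) volume 0 t) ∧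
    (∀ t : ℝ, X t x v = X 0 x v + ∫ s in (0:ℝ)..t, V s x v) ∧
    (∀ t : ℝ, V t x v = V 0 x v + ∫ s in (0:ℝ)..t, F (X s x v))

/-- The quantity `A_δ(t,x,v)`. -/
def Adelta (d : ℕ) (X V Xd Vd : ℝ → Euc d → Euc d → Euc d) (δ : Euc d × Euc d)
    (t : ℝ) (x v : Euc d) : ℝ :=
  ‖δ‖ ^ 2 + (⨆ s ∈ Icc (0:ℝ) t, ‖X s x v - Xd s x v‖ ^ 2)
    + ∫ s in (0:ℝ)..t, ‖V s x v - Vd s x v‖ ^ 2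

private lemma amgm_aux {u lam : ℝ} (hlam : 0 < lam) : u ≤ u ^ 2 / (2 * lam) + lam / 2 := by
  have key : u ≤ (u ^ 2 + lam ^ 2) / (2 * lam) := by
    rw [le_div_iff₀ (by positivity)]
    nlinarith [sq_nonneg (u - lam)]
  calc u ≤ (u ^ 2 + lam ^ 2) / (2 * lam) := key
    _ = u ^ 2 / (2 * lam) + lam / 2 := by field_simp

/-- Lemma 1: `∫_s^T |V_t - V^δ_t| / √(A_δ(t,x,v)) dt ≤ C (log 1/|δ|)^{1/2}`,
with `C` and `δ₀` depending only on `T` and `A`. -/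
theorem lemma_velocity_log_bound (T A : ℝ) (hT : 0 < T) (hA : 0 < A) :
    ∃ C > (0:ℝ), ∃ δ₀ ∈ Ioo (0:ℝ) 1,
      ∀ (d : ℕ) (F : Euc d → Euc d), (∀ y, ‖F y‖ ≤ A) →
      ∀ X V Xd Vd : ℝ → Euc d → Euc d → Euc d,
        IsPointwiseFlowSolution d F X V → IsPointwiseFlowSolution d F Xd Vd →
        (∀ x v : Euc d, X 0 x v = x ∧ V 0 x v = v) →
        ∀ δ : Euc d × Euc d, (∀ x v : Euc d, ‖V 0 x v - Vd 0 x v‖ ≤ ‖δ‖) →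
        0 < ‖δ‖ → ‖δ‖ ≤ δ₀ →
        ∀ x v : Euc d, ∀ s : ℝ, 0 ≤ s → s ≤ T →
          ∫ t in s..T, ‖V t x v - Vd t x v‖ / Real.sqrt (Adelta d X V Xd Vd δ t x v) ≤
            C * Real.sqrt (Real.log (1 / ‖δ‖)) := by
  set M : ℝ := 1 + 2 * A * T with hM
  have hM1 : (1:ℝ) ≤ M := by nlinarith
  have hMpos : (0:ℝ) < M := by linarith
  have hden : (0:ℝ) < 1 + T * M ^ 2 := by positivity
  refine ⟨Real.sqrt (3 * T), by positivity, min (1/2) (1 / (1 + T * M ^ 2)),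
    ⟨lt_min (by norm_num) (by positivity), lt_of_le_of_lt (min_le_left _ _) (by norm_num)⟩,
    ?_⟩
  intro d F hF X V Xd Vd hXV hXdVd hinit δ hδ0v hδpos hδle x v s hs0 hsT
  obtain ⟨hVint, hFXint, hXeq, hVeq⟩ := hXV x v
  obtain ⟨hVdint, hFXdint, hXdeq, hVdeq⟩ := hXdVd x v
  have hδhalf : ‖δ‖ ≤ 1/2 := le_trans hδle (min_le_left _ _)
  have hδsmall : ‖δ‖ ≤ 1 / (1 + T * M ^ 2) := le_trans hδle (min_le_right _ _)
  -- difference of velocities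
  have hGint : ∀ a b : ℝ, IntervalIntegrable
      (fun u => F (X u x v) - F (Xd u x v)) volume a b := by
    intro a b
    exact (((hFXint a).symm.trans (hFXint b)).sub ((hFXdint a).symm.trans (hFXdint b)))
  have hφ : ∀ t : ℝ, V t x v - Vd t x v
      = (V 0 x v - Vd 0 x v) + ∫ u in (0:ℝ)..t, (F (X u x v) - F (Xd u x v)) := by
    intro t
    rw [hVeq t, hVdeq t, intervalIntegral.integral_sub (hFXint t) (hFXdint t)]
    abel
  have hφcont : Continuous (fun t => V t x v - Vd t x v) := by
    have h1 : Continuous fun t => (V 0 x v - Vd 0 x v)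
        + ∫ u in (0:ℝ)..t, (F (X u x v) - F (Xd u x v)) :=
      continuous_const.add (intervalIntegral.continuous_primitive (fun a b => hGint a b) 0)
    exact h1.congr (fun t => (hφ t).symm)
  have hφbound : ∀ t ∈ Icc (0:ℝ) T, ‖V t x v - Vd t x v‖ ≤ M := by
    intro t ht
    rw [hφ t]
    have h2 : ‖∫ u in (0:ℝ)..t, (F (X u x v) - F (Xd u x v))‖ ≤ (2*A) * |t - 0| := by
      apply intervalIntegral.norm_integral_le_of_norm_le_const
      intro u _
      calc ‖F (X u x v) - F (Xd u x v)‖ ≤ ‖F (X u x v)‖ + ‖F (Xd u x v)‖ := norm_sub_le _ _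
        _ ≤ A + A := add_le_add (hF _) (hF _)
        _ = 2 * A := by ring
    have h3 : |t - 0| ≤ T := by
      rw [sub_zero, abs_of_nonneg ht.1]; exact ht.2
    calc ‖(V 0 x v - Vd 0 x v) + ∫ u in (0:ℝ)..t, (F (X u x v) - F (Xd u x v))‖
        ≤ ‖V 0 x v - Vd 0 x v‖ + ‖∫ u in (0:ℝ)..t, (F (X u x v) - F (Xd u x v))‖ :=
          norm_add_le _ _
      _ ≤ ‖δ‖ + (2*A) * |t - 0| := add_le_add (hδ0v x v) h2
      _ ≤ 1/2 + (2*A) * T := add_le_add hδhalf (by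
            have := mul_le_mul_of_nonneg_left h3 (by positivity : (0:ℝ) ≤ 2*A)
            linarith)
      _ ≤ M := by rw [hM]; linarith
  -- the functions h and g
  set h : ℝ → ℝ := fun t => ‖V t x v - Vd t x v‖ ^ 2 with hh
  have hhcont : Continuous h := hφcont.norm.pow 2
  have hhnonneg : ∀ t, 0 ≤ h t := fun t => sq_nonneg _
  have hhint : ∀ a b : ℝ, IntervalIntegrable h volume a b :=
    fun a b => hhcont.intervalIntegrable a b
  have hhbound : ∀ t ∈ Icc (0:ℝ) T, h t ≤ M ^ 2 := by
    intro t ht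
    exact pow_le_pow_left₀ (norm_nonneg _) (hφbound t ht) 2
  set g : ℝ → ℝ := fun t => ‖δ‖ ^ 2 + ∫ u in (0:ℝ)..t, h u with hg
  have hgcont : Continuous g :=
    continuous_const.add (intervalIntegral.continuous_primitive (fun a b => hhint a b) 0)
  have hgpos : ∀ t : ℝ, 0 ≤ t → ‖δ‖ ^ 2 ≤ g t := by
    intro t ht
    have : 0 ≤ ∫ u in (0:ℝ)..t, h u :=
      intervalIntegral.integral_nonneg ht (fun u _ => hhnonneg u)
    simp only [hg]; linarith
  have hgpos' : ∀ t : ℝ, 0 ≤ t → 0 < g t := by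
    intro t ht
    exact lt_of_lt_of_le (by positivity) (hgpos t ht)
  have hgderiv : ∀ t : ℝ, HasDerivAt g (h t) t := by
    intro t
    exact (intervalIntegral.integral_hasDerivAt_right (hhint 0 t)
      (hhcont.stronglyMeasurableAtFilter volume (nhds t)) hhcont.continuousAt).const_add _
  -- g T upper bound
  have hgT : g T ≤ 1 + T * M ^ 2 := by
    have h1 : ∫ u in (0:ℝ)..T, h u ≤ ∫ _ in (0:ℝ)..T, M ^ 2 :=
      intervalIntegral.integral_mono_on hT.le (hhint 0 T) intervalIntegrable_const
        (fun u hu => hhbound u hu)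
    rw [intervalIntegral.integral_const, smul_eq_mul, sub_zero] at h1
    have h2 : ‖δ‖ ^ 2 ≤ 1 := by nlinarith
    simp only [hg]; linarith
  -- the logarithm quantity
  set ℓ : ℝ := Real.log (1 / ‖δ‖) with hℓ
  have hℓeq : ℓ = -Real.log ‖δ‖ := by rw [hℓ, one_div, Real.log_inv]
  have hℓpos : 0 < ℓ := by
    rw [hℓ]
    apply Real.log_pos
    rw [lt_div_iff₀ hδpos]
    linarith
  -- bound on ∫ h/g
  have hloggs : -2 * ℓ ≤ Real.log (g s) := by
    have h1 : Real.log (‖δ‖ ^ 2) ≤ Real.log (g s) :=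
      Real.log_le_log (by positivity) (hgpos s hs0)
    rw [Real.log_pow] at h1
    push_cast at h1
    rw [hℓeq]; linarith
  have hloggT : Real.log (g T) ≤ ℓ := by
    have h1 : Real.log (g T) ≤ Real.log (1 + T * M ^ 2) :=
      Real.log_le_log (hgpos' T hT.le) hgT
    have h2 : 1 + T * M ^ 2 ≤ 1 / ‖δ‖ := by
      rw [le_div_iff₀ hδpos]
      calc (1 + T * M ^ 2) * ‖δ‖ ≤ (1 + T * M ^ 2) * (1 / (1 + T * M ^ 2)) :=
            mul_le_mul_of_nonneg_left hδsmall hden.le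
        _ = 1 := by field_simp
    have h3 : Real.log (1 + T * M ^ 2) ≤ ℓ := Real.log_le_log hden h2
    linarith
  have hhgint : IntervalIntegrable (fun t => h t / g t) volume s T := by
    apply ContinuousOn.intervalIntegrable
    apply hhcont.continuousOn.div hgcont.continuousOn
    intro t ht
    rw [uIcc_of_le hsT] at ht
    exact ne_of_gt (hgpos' t (le_trans hs0 ht.1))
  have hftc : ∫ t in s..T, h t / g t = Real.log (g T) - Real.log (g s) := by
    apply intervalIntegral.integral_eq_sub_of_hasDerivAt
    · intro t ht
      rw [uIcc_of_le hsT] at ht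
      exact (hgderiv t).log (ne_of_gt (hgpos' t (le_trans hs0 ht.1)))
    · exact hhgint
  have hL : ∫ t in s..T, h t / g t ≤ 3 * ℓ := by rw [hftc]; linarith
  -- parameter lambda
  set lam : ℝ := Real.sqrt (3 * ℓ / T) with hlam
  have hlampos : 0 < lam := Real.sqrt_pos.mpr (by positivity)
  have hlamsq : lam ^ 2 = 3 * ℓ / T := Real.sq_sqrt (by positivity)
  -- the comparison function
  set B : ℝ → ℝ := fun t => (1 / (2 * lam)) * (h t / g t) + lam / 2 with hB
  have hBint : IntervalIntegrable B volume s T :=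
    (hhgint.const_mul _).add intervalIntegrable_const
  have hpt : ∀ t ∈ Icc s T,
      ‖V t x v - Vd t x v‖ / Real.sqrt (Adelta d X V Xd Vd δ t x v) ≤ B t := by
    intro t ht
    have ht0 : 0 ≤ t := le_trans hs0 ht.1
    have hgt : 0 < g t := hgpos' t ht0
    have hsup : 0 ≤ ⨆ u ∈ Icc (0:ℝ) t, ‖X u x v - Xd u x v‖ ^ 2 :=
      Real.iSup_nonneg (fun u => Real.iSup_nonneg (fun _ => sq_nonneg _))
    have hAge : g t ≤ Adelta d X V Xd Vd δ t x v := by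
      simp only [Adelta, hg, hh]
      linarith
    have hsq : 0 < Real.sqrt (g t) := Real.sqrt_pos.mpr hgt
    have step1 : ‖V t x v - Vd t x v‖ / Real.sqrt (Adelta d X V Xd Vd δ t x v)
        ≤ ‖V t x v - Vd t x v‖ / Real.sqrt (g t) :=
      div_le_div_of_nonneg_left (norm_nonneg _) hsq (Real.sqrt_le_sqrt hAge)
    have step2 : ‖V t x v - Vd t x v‖ / Real.sqrt (g t) ≤ B t := by
      have := amgm_aux (u := ‖V t x v - Vd t x v‖ / Real.sqrt (g t)) hlampos
      have hsqeq : (‖V t x v - Vd t x v‖ / Real.sqrt (g t)) ^ 2 = h t / g t := by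
        rw [div_pow, Real.sq_sqrt hgt.le]
      rw [hsqeq] at this
      calc ‖V t x v - Vd t x v‖ / Real.sqrt (g t)
          ≤ (h t / g t) / (2 * lam) + lam / 2 := this
        _ = B t := by rw [hB]; ring
    exact le_trans step1 step2
  -- final bound
  have hRHS : Real.sqrt (3 * T) * Real.sqrt ℓ = lam * T := by
    have h1 : Real.sqrt (3 * T) * Real.sqrt ℓ = Real.sqrt (3 * T * ℓ) :=
      (Real.sqrt_mul (by positivity) _).symm
    have h2 : lam * T = Real.sqrt (3 * T * ℓ) := by
      rw [hlam, show (3:ℝ) * T * ℓ = 3 * ℓ / T * T ^ 2 by field_simp,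
        Real.sqrt_mul (by positivity) (T ^ 2), Real.sqrt_sq hT.le]
    rw [h1, h2]
  by_cases hint : IntervalIntegrable
      (fun t => ‖V t x v - Vd t x v‖ / Real.sqrt (Adelta d X V Xd Vd δ t x v)) volume s T
  · have hmono := intervalIntegral.integral_mono_on hsT hint hBint hpt
    have hBval : ∫ t in s..T, B t
        = (1 / (2 * lam)) * (∫ t in s..T, h t / g t) + (T - s) * (lam / 2) := by
      rw [hB]
      rw [intervalIntegral.integral_add (hhgint.const_mul _) intervalIntegrable_const,
        intervalIntegral.integral_const_mul, intervalIntegral.integral_const, smul_eq_mul]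
    have hBbound : ∫ t in s..T, B t ≤ lam * T := by
      rw [hBval]
      have e1 : (1 / (2 * lam)) * (∫ t in s..T, h t / g t) ≤ (1 / (2 * lam)) * (3 * ℓ) :=
        mul_le_mul_of_nonneg_left hL (by positivity)
      have e2 : (T - s) * (lam / 2) ≤ T * (lam / 2) :=
        mul_le_mul_of_nonneg_right (by linarith) (by positivity)
      have e3 : (1 / (2 * lam)) * (3 * ℓ) + T * (lam / 2) = lam * T := by
        have h3ℓ : 3 * ℓ = lam ^ 2 * T := by rw [hlamsq]; field_simp
        rw [h3ℓ]
        field_simp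
        ring
      exact le_of_le_of_eq (add_le_add e1 e2) e3
    calc ∫ t in s..T, ‖V t x v - Vd t x v‖ / Real.sqrt (Adelta d X V Xd Vd δ t x v)
        ≤ ∫ t in s..T, B t := hmono
      _ ≤ lam * T := hBbound
      _ = Real.sqrt (3 * T) * Real.sqrt ℓ := hRHS.symm
  · rw [intervalIntegral.integral_undef hint]
    positivity
end
end

section
/- Let T > 0 and let f : [0,T] → ℝ be Lipschitz continuous. Then the running maximum m(t) := max_{0 ≤ s ≤ t} f(s)² is Lipschitz continuous on [0,T], and for almost every t ∈ [0,T] its derivative satisfies m'(t) ≤ 2 |f(t)| |f'(t)| ≤ 4 |f(t)|² + 4 |f'(t)|². -/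
open MeasureTheory Set Filter Topology

noncomputable section

/-- The running maximum `m(t) = max_{0 ≤ s ≤ t} f(s)²` of a Lipschitz function `f` on
`[0,T]` is Lipschitz, and a.e. its derivative satisfies
`m'(t) ≤ 2|f(t)||f'(t)| ≤ 4|f(t)|² + 4|f'(t)|²`. -/
theorem running_max_lipschitz_and_deriv_bound (T : ℝ) (hT : 0 < T)
    (f : ℝ → ℝ) (K : NNReal) (hf : LipschitzOnWith K f (Icc 0 T)) :
    (∃ K' : NNReal,
      LipschitzOnWith K' (fun t => sSup ((fun s => f s ^ 2) '' Icc 0 t)) (Icc 0 T)) ∧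
    ∃ f' m' : ℝ → ℝ, ∀ᵐ t ∂(volume.restrict (Icc 0 T)),
      HasDerivWithinAt f (f' t) (Icc 0 T) t ∧
      HasDerivWithinAt (fun u => sSup ((fun s => f s ^ 2) '' Icc 0 u)) (m' t) (Icc 0 T) t ∧
      m' t ≤ 2 * |f t| * |f' t| ∧
      2 * |f t| * |f' t| ≤ 4 * |f t| ^ 2 + 4 * |f' t| ^ 2 := by
  set g : ℝ → ℝ := fun s => f s ^ 2 with hgdef
  set m : ℝ → ℝ := fun t => sSup (g '' Icc 0 t) with hmdef
  have hfd : ∀ x ∈ Icc (0:ℝ) T, ∀ y ∈ Icc (0:ℝ) T, |f x - f y| ≤ K * |x - y| := by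
    intro x hx y hy
    have := (lipschitzOnWith_iff_dist_le_mul.1 hf) x hx y hy
    rwa [Real.dist_eq, Real.dist_eq] at this
  set B : ℝ := |f 0| + K * T with hBdef
  have hB0 : 0 ≤ B := add_nonneg (abs_nonneg _) (mul_nonneg K.2 hT.le)
  have hB : ∀ x ∈ Icc (0:ℝ) T, |f x| ≤ B := by
    intro x hx
    have h1 := hfd x hx 0 (left_mem_Icc.2 hT.le)
    have h2 : |x - 0| = x := by rw [sub_zero, abs_of_nonneg hx.1]
    have h3 : (K:ℝ) * x ≤ K * T := mul_le_mul_of_nonneg_left hx.2 K.2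
    have := abs_sub_abs_le_abs_sub (f x) (f 0)
    rw [h2] at h1
    simp only [hBdef]
    linarith
  have hL0 : 0 ≤ 2 * B * K := by positivity
  set K' : NNReal := (2 * B * K).toNNReal with hK'def
  have hK'c : (K' : ℝ) = 2 * B * K := Real.coe_toNNReal _ hL0
  -- g is Lipschitz on [0,T]
  have hg : LipschitzOnWith K' g (Icc 0 T) := by
    rw [lipschitzOnWith_iff_dist_le_mul]
    intro x hx y hy
    rw [Real.dist_eq, Real.dist_eq, hK'c]
    have h1 : g x - g y = (f x + f y) * (f x - f y) := by simp only [hgdef]; ring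
    rw [h1, abs_mul]
    have h2 : |f x + f y| ≤ 2 * B := by
      have := abs_add_le (f x) (f y)
      have := hB x hx; have := hB y hy; linarith
    have h3 := hfd x hx y hy
    calc |f x + f y| * |f x - f y| ≤ (2 * B) * ((K:ℝ) * |x - y|) :=
          mul_le_mul h2 h3 (abs_nonneg _) (by positivity)
      _ = 2 * B * K * |x - y| := by ring
  have hbdd : ∀ t ∈ Icc (0:ℝ) T, BddAbove (g '' Icc 0 t) := fun t ht =>
    (isCompact_Icc.image_of_continuousOn
      (hg.continuousOn.mono (Icc_subset_Icc_right ht.2))).bddAbove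
  have hne : ∀ t : ℝ, 0 ≤ t → (g '' Icc 0 t).Nonempty := fun t ht =>
    (nonempty_Icc.2 ht).image g
  have hmono : ∀ x y : ℝ, 0 ≤ x → x ≤ y → y ≤ T → m x ≤ m y := by
    intro x y hx hxy hyT
    exact csSup_le_csSup (hbdd y ⟨hx.trans hxy, hyT⟩) (hne x hx)
      (image_mono (Icc_subset_Icc_right hxy))
  have hgle : ∀ x t : ℝ, 0 ≤ x → x ≤ t → t ≤ T → g x ≤ m t := by
    intro x t hx hxt htT
    exact le_csSup (hbdd t ⟨hx.trans hxt, htT⟩) (mem_image_of_mem g ⟨hx, hxt⟩)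
  have hkey : ∀ a b : ℝ, a ∈ Icc 0 T → b ∈ Icc 0 T → a ≤ b → m b ≤ m a + K' * (b - a) := by
    intro a b ha hb hab
    apply csSup_le (hne b hb.1)
    rintro z ⟨s, hs, rfl⟩
    rcases le_total s a with h | h
    · have := hgle s a hs.1 h ha.2
      have : g s ≤ m a := this
      nlinarith [mul_nonneg (K'.2 : (0:ℝ) ≤ K') (sub_nonneg.2 hab)]
    · have h1 : |g s - g a| ≤ (K':ℝ) * |s - a| := by
        have := (lipschitzOnWith_iff_dist_le_mul.1 hg) s ⟨hs.1, hs.2.trans hb.2⟩ a ha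
        rwa [Real.dist_eq, Real.dist_eq] at this
      have h2 : |s - a| = s - a := abs_of_nonneg (by linarith)
      have h3 : g a ≤ m a := hgle a a ha.1 le_rfl ha.2
      have h4 : (K':ℝ) * (s - a) ≤ K' * (b - a) :=
        mul_le_mul_of_nonneg_left (by linarith [hs.2]) K'.2
      rw [h2] at h1
      have := abs_sub_abs_le_abs_sub (g s) (g a)
      have h5 : g s - g a ≤ |g s - g a| := le_abs_self _
      linarith
  have hm : LipschitzOnWith K' m (Icc 0 T) := by
    rw [lipschitzOnWith_iff_dist_le_mul]
    intro x hx y hy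
    rw [Real.dist_eq, Real.dist_eq]
    rcases le_total x y with h | h
    · have h1 := hkey x y hx hy h
      have h2 := hmono x y hx.1 h hy.2
      rw [abs_of_nonpos (by linarith), abs_of_nonpos (by linarith)]
      linarith
    · have h1 := hkey y x hy hx h
      have h2 := hmono y x hy.1 h hx.2
      rw [abs_of_nonneg (by linarith), abs_of_nonneg (by linarith)]
      linarith
  refine ⟨⟨K', hm⟩, ?_⟩
  obtain ⟨F, hF, hFf⟩ := hf.extend_real
  obtain ⟨M, hM, hMm⟩ := hm.extend_real
  refine ⟨deriv F, deriv M, ?_⟩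
  have h1 : ∀ᵐ t ∂(volume.restrict (Icc 0 T)), DifferentiableAt ℝ F t :=
    ae_restrict_of_ae hF.ae_differentiableAt
  have h2 : ∀ᵐ t ∂(volume.restrict (Icc 0 T)), DifferentiableAt ℝ M t :=
    ae_restrict_of_ae hM.ae_differentiableAt
  have h3 : ∀ᵐ t ∂(volume.restrict (Icc 0 T)), t ∈ Ioo 0 T := by
    have hz : (volume : Measure ℝ) {0, T} = 0 :=
      (Set.Finite.measure_zero (by simp) volume)
    have : ∀ᵐ t ∂(volume : Measure ℝ), t ∉ ({0, T} : Set ℝ) :=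
      measure_eq_zero_iff_ae_notMem.1 hz
    filter_upwards [ae_restrict_of_ae this, ae_restrict_mem measurableSet_Icc] with t h ht
    simp only [mem_insert_iff, mem_singleton_iff, not_or] at h
    exact ⟨lt_of_le_of_ne ht.1 (Ne.symm h.1), lt_of_le_of_ne ht.2 h.2⟩
  filter_upwards [h1, h2, h3] with t hFd hMd ht
  have htIcc : t ∈ Icc 0 T := Ioo_subset_Icc_self ht
  refine ⟨((hFd.hasDerivAt).hasDerivWithinAt).congr (fun x hx => hFf hx) (hFf htIcc),
    ((hMd.hasDerivAt).hasDerivWithinAt).congr (fun x hx => hMm hx) (hMm htIcc), ?_, ?_⟩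
  · -- main bound: deriv M t ≤ 2 |f t| |deriv F t|
    set G : ℝ → ℝ := fun x => F x ^ 2 with hGdef
    have hGd : HasDerivAt G (2 * F t * deriv F t) t := by
      have := (hFd.hasDerivAt).pow 2
      rw [show (2:ℕ) - 1 = 1 from rfl, pow_one, Nat.cast_ofNat] at this
      exact this
    have hGg : ∀ x ∈ Icc (0:ℝ) T, G x = g x := fun x hx => by
      simp only [hGdef, hgdef, hFf hx]
    have hsub : 𝓝[<] t ≤ 𝓝[≠] t :=
      nhdsWithin_mono t (fun x (hx : x < t) => ne_of_lt hx)
    have hslopeM : Tendsto (slope M t) (𝓝[<] t) (𝓝 (deriv M t)) :=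
      (hasDerivAt_iff_tendsto_slope.1 hMd.hasDerivAt).mono_left hsub
    have habs : 2 * f t * deriv F t ≤ 2 * |f t| * |deriv F t| := by
      have h := (le_abs_self (f t * deriv F t)).trans_eq (abs_mul _ _)
      linarith
    by_cases hc : m t ≤ g t
    · -- m(t) = g(t): compare with slope of G from the left
      have hev : ∀ᶠ x in 𝓝[<] t, slope M t x ≤ slope G t x := by
        filter_upwards [Ioo_mem_nhdsLT_of_mem (⟨ht.1, le_refl t⟩ : t ∈ Ioc 0 t)] with x hx
        have hxI : x ∈ Icc 0 T := ⟨hx.1.le, hx.2.le.trans htIcc.2⟩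
        rw [slope_comm M t x, slope_comm G t x, slope_def_field, slope_def_field]
        have hnum : M t - M x ≤ G t - G x := by
          have e1 : M t = m t := (hMm htIcc).symm ▸ rfl
          have e2 : M x = m x := (hMm hxI).symm ▸ rfl
          have e3 : G t = g t := hGg t htIcc
          have e4 : G x = g x := hGg x hxI
          have h4 : g x ≤ m x := hgle x x hx.1.le le_rfl hxI.2
          rw [← hMm htIcc, ← hMm hxI, e3, e4]
          linarith
        have hd : (0:ℝ) < t - x := by linarith [hx.2]
        gcongr
      have hslopeG : Tendsto (slope G t) (𝓝[<] t) (𝓝 (2 * F t * deriv F t)) :=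
        (hasDerivAt_iff_tendsto_slope.1 hGd).mono_left hsub
      have hle : deriv M t ≤ 2 * F t * deriv F t :=
        le_of_tendsto_of_tendsto hslopeM hslopeG hev
      rw [← hFf htIcc] at hle
      linarith
    · -- m(t) > g(t): m is locally constant to the left of t
      push_neg at hc
      have hgc : ContinuousOn g (Icc 0 t) :=
        hg.continuousOn.mono (Icc_subset_Icc_right htIcc.2)
      obtain ⟨a, haI, hamax⟩ :=
        isCompact_Icc.exists_isMaxOn (nonempty_Icc.2 htIcc.1) hgc
      have haT : a ∈ Icc 0 T := ⟨haI.1, haI.2.trans htIcc.2⟩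
      have hma : m t = g a := by
        apply IsGreatest.csSup_eq
        exact ⟨mem_image_of_mem g haI, by rintro z ⟨s, hs, rfl⟩; exact hamax hs⟩
      obtain ⟨δ, hδ0, hδ⟩ := Metric.continuousAt_iff.1 hGd.continuousAt (m t - g t)
        (by linarith)
      have hev : ∀ᶠ x in 𝓝[<] t, slope M t x = 0 := by
        have hmem : t ∈ Ioc (max (t - δ) 0) t :=
          ⟨max_lt (by linarith) ht.1, le_refl t⟩
        filter_upwards [Ioo_mem_nhdsLT_of_mem hmem] with x hx
        have hx0 : 0 < x := lt_of_le_of_lt (le_max_right _ _) hx.1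
        have hxδ : t - δ < x := lt_of_le_of_lt (le_max_left _ _) hx.1
        have hxI : x ∈ Icc 0 T := ⟨hx0.le, hx.2.le.trans htIcc.2⟩
        have hax : a ≤ x := by
          by_contra h
          push_neg at h
          have hd : dist a t < δ := by
            rw [Real.dist_eq, abs_of_nonpos (by linarith [haI.2])]
            linarith [haI.2]
          have := hδ hd
          rw [Real.dist_eq, hGg a haT, hGg t htIcc] at this
          have h5 : g a - g t ≤ |g a - g t| := le_abs_self _
          linarith [hma ▸ le_refl (m t)]
        have hmx : m t ≤ m x := hma ▸ hgle a x haI.1 hax hxI.2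
        have hmx' : m x ≤ m t := hmono x t hx0.le hx.2.le htIcc.2
        rw [slope_def_field, ← hMm htIcc, ← hMm hxI,
          le_antisymm hmx' hmx]
        simp
      have h0 : Tendsto (slope M t) (𝓝[<] t) (𝓝 0) :=
        Tendsto.congr' (Filter.EventuallyEq.symm hev) tendsto_const_nhds
      have : deriv M t = 0 := tendsto_nhds_unique hslopeM h0
      rw [this]
      positivity
  · nlinarith [sq_nonneg (|f t| - |deriv F t|), abs_nonneg (f t), abs_nonneg (deriv F t)]
end
end

section
/- Let d ≥ 2 and x, y ∈ ℝ^d with x ≠ y. Let H = {h ∈ ℝ^d : h·(x−y) = 0} and define F_{x,y}(θ,h) = θ(x − y + 4(1−θ)h) on [0,1] × {h ∈ H : |h| ≤ |x−y|}. Then: (i) F_{x,y} maps its domain onto K(x−y); (ii) F_{x,y} restricted to (0,1) × {h ∈ H : |h| ≤ |x−y|} is injective, with inverse given on z in its image by θ(z) = (z·(x−y))/|x−y|² and h(z) = (z − θ(z)(x−y))/(4 θ(z)(1−θ(z))); (iii) for every θ ∈ (0,1) and h in the domain, the absolute value of the Jacobian determinant of F_{x,y} (as a map from (0,1) × H, H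 being a (d−1)-dimensional hyperplane) at (θ,h) equals (4θ(1−θ))^{d−1} |x−y|. -/
open MeasureTheory Set
open scoped InnerProductSpace

noncomputable section

/-- The cone `K(w)`. -/
def Kcone (d : ℕ) (w : Euc d) : Set (Euc d) :=
  {z | ∃ θ ∈ Icc (0:ℝ) 1, ∃ h : Euc d,
    ⟪h, w⟫_ℝ = 0 ∧ ‖h‖ ≤ ‖w‖ ∧ z = θ • (w + (4 * (1 - θ)) • h)}

/-- The change of variables `F_{x,y}(θ,h) = θ(x − y + 4(1−θ)h)`. -/
def Fxy (d : ℕ) (x y : Euc d) (q : ℝ × Euc d) : Euc d :=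
  q.1 • ((x - y) + (4 * (1 - q.1)) • q.2)

/-- Properties of the change of variables `F_{x,y}`: (i) it maps
`[0,1] × {h ∈ H : |h| ≤ |x−y|}` onto `K(x−y)`; (ii) it is injective on
`(0,1) × {h ∈ H : |h| ≤ |x−y|}` with the explicit inverse
`θ(z) = z·(x−y)/|x−y|²`, `h(z) = (z − θ(z)(x−y))/(4θ(z)(1−θ(z)))`;
(iii) in any orthonormal coordinates (on `H` and on `ℝ^d`) its Jacobian
determinant has absolute value `(4θ(1−θ))^{d−1} |x−y|`. -/
theorem Fxy_properties (d : ℕ) (hd : 2 ≤ d) (x y : Euc d) (hxy : x ≠ y) :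
    -- (i) surjectivity onto the cone
    (Fxy d x y '' (Icc (0:ℝ) 1 ×ˢ
        {h : Euc d | ⟪h, x - y⟫_ℝ = 0 ∧ ‖h‖ ≤ ‖x - y‖}) = Kcone d (x - y)) ∧
    -- (ii) injectivity and explicit inverse
    (InjOn (Fxy d x y) (Ioo (0:ℝ) 1 ×ˢ
        {h : Euc d | ⟪h, x - y⟫_ℝ = 0 ∧ ‖h‖ ≤ ‖x - y‖})) ∧
    (∀ θ ∈ Ioo (0:ℝ) 1, ∀ h : Euc d, ⟪h, x - y⟫_ℝ = 0 → ‖h‖ ≤ ‖x - y‖ →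
      ⟪Fxy d x y (θ, h), x - y⟫_ℝ / ‖x - y‖ ^ 2 = θ ∧
      (4 * θ * (1 - θ))⁻¹ • (Fxy d x y (θ, h) - θ • (x - y)) = h) ∧
    -- (iii) the Jacobian determinant
    (∀ (β : OrthonormalBasis (Option (Fin (d - 1))) ℝ (Euc d))
        (b : OrthonormalBasis (Fin (d - 1)) ℝ
          ((ℝ ∙ (x - y))ᗮ : Submodule ℝ (Euc d))),
      ∀ θ ∈ Ioo (0:ℝ) 1, ∀ h : Euc d, ⟪h, x - y⟫_ℝ = 0 → ‖h‖ ≤ ‖x - y‖ →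
        |(Matrix.of (fun i j : Option (Fin (d - 1)) =>
            β.repr (j.elim ((x - y) + (4 * (1 - 2 * θ)) • h)
              (fun l => (4 * θ * (1 - θ)) • ((b l : Euc d)))) i)).det| =
          (4 * θ * (1 - θ)) ^ (d - 1) * ‖x - y‖) := by
  have hw0 : x - y ≠ 0 := sub_ne_zero.mpr hxy
  have hwn : ‖x - y‖ ≠ 0 := norm_ne_zero_iff.mpr hw0
  have key : ∀ (θ : ℝ) (h : Euc d), ⟪h, x - y⟫_ℝ = 0 →
      ⟪Fxy d x y (θ, h), x - y⟫_ℝ = θ * ‖x - y‖ ^ 2 := by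
    intro θ h hh
    show ⟪θ • ((x - y) + (4 * (1 - θ)) • h), x - y⟫_ℝ = θ * ‖x - y‖ ^ 2
    rw [real_inner_smul_left, inner_add_left, real_inner_smul_left, hh,
      real_inner_self_eq_norm_sq]
    ring
  refine ⟨?_, ?_, ?_, ?_⟩
  · ext z
    simp only [mem_image, Kcone, mem_setOf_eq, mem_prod, Prod.exists]
    constructor
    · rintro ⟨θ, h, ⟨hθ, hh1, hh2⟩, rfl⟩
      exact ⟨θ, hθ, h, hh1, hh2, rfl⟩
    · rintro ⟨θ, hθ, h, hh1, hh2, rfl⟩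
      exact ⟨θ, h, ⟨hθ, hh1, hh2⟩, rfl⟩
  · rintro ⟨θ₁, h₁⟩ ⟨hθ₁, hh₁, _⟩ ⟨θ₂, h₂⟩ ⟨hθ₂, hh₂, _⟩ heq
    have hθeq : θ₁ = θ₂ := by
      have e1 := key θ₁ h₁ hh₁
      have e2 := key θ₂ h₂ hh₂
      rw [show Fxy d x y (θ₁, h₁) = Fxy d x y (θ₂, h₂) from heq, e2] at e1
      have := mul_right_cancel₀ (pow_ne_zero 2 hwn) e1
      linarith [this]
    subst hθeq
    have hθ0 : θ₁ ≠ 0 := ne_of_gt hθ₁.1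
    have hc0 : (4 * (1 - θ₁)) ≠ 0 := by nlinarith [hθ₁.2]
    have heq' : θ₁ • ((x - y) + (4 * (1 - θ₁)) • h₁) = θ₁ • ((x - y) + (4 * (1 - θ₁)) • h₂) := heq
    have := smul_right_injective (Euc d) hθ0 heq'
    have := add_left_cancel this
    have := smul_right_injective (Euc d) hc0 this
    exact Prod.ext rfl this
  · intro θ hθ h hh _
    have hc0 : (4 * θ * (1 - θ)) ≠ 0 := by nlinarith [hθ.1, hθ.2]
    constructor
    · rw [key θ h hh]
      field_simp
    · have : Fxy d x y (θ, h) - θ • (x - y) = (4 * θ * (1 - θ)) • h := by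
        show θ • ((x - y) + (4 * (1 - θ)) • h) - θ • (x - y) = (4 * θ * (1 - θ)) • h
        rw [smul_add, add_sub_cancel_left, smul_smul]
        ring_nf
      rw [this, smul_smul, inv_mul_cancel₀ hc0, one_smul]
  · intro β b θ hθ h hinner hnorm
    classical
    have hw0 : x - y ≠ 0 := sub_ne_zero.mpr hxy
    have hwn : ‖x - y‖ ≠ 0 := norm_ne_zero_iff.mpr hw0
    set c : ℝ := 4 * θ * (1 - θ) with hc
    have hcpos : (0:ℝ) < c := by nlinarith [hθ.1, hθ.2]
    set c₁ : ℝ := 4 * (1 - 2 * θ) with hc1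
    set v : Option (Fin (d-1)) → Euc d :=
      fun j => j.elim ((x - y) + c₁ • h) (fun l => c • (b l : Euc d)) with hv
    -- the matrix is the toMatrix of v in β.toBasis
    have hM : (Matrix.of (fun i j : Option (Fin (d-1)) => β.repr (v j) i)) = β.toBasis.toMatrix v := by
      ext i j
      simp [Module.Basis.toMatrix, OrthonormalBasis.coe_toBasis_repr_apply]
    rw [show (Matrix.of (fun i j : Option (Fin (d - 1)) =>
              β.repr (j.elim ((x - y) + (4 * (1 - 2 * θ)) • h)
                (fun l => (4 * θ * (1 - θ)) • ((b l : Euc d)))) i)) =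
        β.toBasis.toMatrix v from hM, ← Module.Basis.det_apply]
    -- helper family
    set u : Euc d → (Option (Fin (d-1)) → Euc d) :=
      fun z j => j.elim z (fun l => (b l : Euc d)) with hu
    have hupdate : ∀ z : Euc d, u z = Function.update (u 0) none z := by
      intro z; funext j; cases j <;> simp [hu, Function.update]
    -- factor out scalars
    have hfact : v = fun j => (j.elim 1 fun _ => c) • (u ((x - y) + c₁ • h)) j := by
      funext j; cases j <;> simp [hv, hu]
    have hprod : (∏ j : Option (Fin (d-1)), (j.elim 1 fun _ => c : ℝ)) = c ^ (d-1) := by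
      simp [Fintype.prod_option]
    have h1 : β.toBasis.det v = c ^ (d-1) • β.toBasis.det (u ((x - y) + c₁ • h)) := by
      rw [hfact, ← hprod]
      exact β.toBasis.det.toMultilinearMap.map_smul_univ _ _
    -- h is in the orthogonal complement
    have hmem : h ∈ (ℝ ∙ (x - y))ᗮ := by
      rw [Submodule.mem_orthogonal_singleton_iff_inner_right]
      rw [real_inner_comm]; exact hinner
    -- the h-slot vanishes
    have hdep : ¬ LinearIndependent ℝ (u h) := by
      intro hli
      set f : Option (Fin (d-1)) → ((ℝ ∙ (x - y))ᗮ : Submodule ℝ (Euc d)) :=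
        fun j => j.elim ⟨h, hmem⟩ b with hf
      have hcomp : u h = ((ℝ ∙ (x - y))ᗮ).subtype ∘ f := by
        funext j; cases j <;> rfl
      have hli' : LinearIndependent ℝ f := by
        apply LinearIndependent.of_comp (((ℝ ∙ (x - y))ᗮ).subtype)
        rwa [← hcomp]
      have hcard := hli'.fintype_card_le_finrank
      have hfr : Module.finrank ℝ ((ℝ ∙ (x - y))ᗮ : Submodule ℝ (Euc d)) = d - 1 := by
        have h2 := Submodule.finrank_add_finrank_orthogonal (K := ℝ ∙ (x - y))
        rw [finrank_span_singleton hw0, finrank_euclideanSpace_fin] at h2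
        omega
      rw [hfr] at hcard
      simp [Fintype.card_option] at hcard
    have hz : β.toBasis.det (u h) = 0 := β.toBasis.det.map_linearDependent _ hdep
    -- linearity in the none slot
    have hadd : β.toBasis.det (u ((x - y) + c₁ • h)) = β.toBasis.det (u (x - y)) := by
      rw [hupdate ((x - y) + c₁ • h), AlternatingMap.map_update_add, AlternatingMap.map_update_smul,
        ← hupdate (x - y), ← hupdate h, hz]
      simp
    -- the unit vector family is an orthonormal basis
    set e : Euc d := ‖x - y‖⁻¹ • (x - y) with he
    have hwsmul : (x - y) = ‖x - y‖ • e := by rw [he, smul_inv_smul₀ hwn]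
    have hsc : β.toBasis.det (u (x - y)) = ‖x - y‖ • β.toBasis.det (u e) := by
      conv_lhs => rw [hupdate (x - y), hwsmul]
      rw [AlternatingMap.map_update_smul, ← hupdate e]
    have horth : Orthonormal ℝ (u e) := by
      constructor
      · intro j; cases j with
        | none => simp [hu, he, norm_smul, abs_of_nonneg, inv_mul_cancel₀ hwn]
        | some l => exact b.orthonormal.1 l
      · intro i j hij
        have hbw : ∀ l, ⟪(x - y), (b l : Euc d)⟫_ℝ = 0 := fun l =>
          Submodule.mem_orthogonal_singleton_iff_inner_right.mp (b l).2
        cases i with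
        | none => cases j with
          | none => exact absurd rfl hij
          | some l =>
            show ⟪‖x - y‖⁻¹ • (x - y), ((b l : Euc d))⟫_ℝ = 0
            rw [real_inner_smul_left, hbw l, mul_zero]
        | some l => cases j with
          | none =>
            show ⟪((b l : Euc d)), ‖x - y‖⁻¹ • (x - y)⟫_ℝ = 0
            rw [real_inner_smul_right, real_inner_comm, hbw l, mul_zero]
          | some l' =>
            have := b.orthonormal.2 (show l ≠ l' by simpa using hij)
            simpa [hu, Submodule.coe_inner] using this
    have hcardeq : Fintype.card (Option (Fin (d-1))) =
        Module.finrank ℝ (Euc d) := by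
      simp [Fintype.card_option, finrank_euclideanSpace_fin]; omega
    set B := basisOfLinearIndependentOfCardEqFinrank horth.linearIndependent hcardeq with hB
    have hBcoe : ⇑B = u e := coe_basisOfLinearIndependentOfCardEqFinrank _ _
    have horthB : Orthonormal ℝ B := by rwa [hBcoe]
    set γ := B.toOrthonormalBasis horthB with hγ
    have hγcoe : ⇑γ = u e := by rw [hγ, Module.Basis.coe_toOrthonormalBasis, hBcoe]
    have hdet1 : |β.toBasis.det (u e)| = 1 := by
      rcases β.det_to_matrix_orthonormalBasis_real γ with h' | h' <;>
        rw [hγcoe] at h' <;> rw [h'] <;> norm_num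
    rw [h1, hadd, hsc]
    simp only [smul_eq_mul, abs_mul, abs_pow, abs_of_pos hcpos, abs_norm, hdet1]
    ring
end
end

section
/- Let d ≥ 2. There exists a constant C_d > 0 such that for every w ∈ ℝ^d with w ≠ 0, ∫_{K(w)} |z|^{−(d−1)} dz ≤ C_d |w|, where the integral is with respect to Lebesgue measure on ℝ^d. -/
open MeasureTheory Set Metric Module
open scoped InnerProductSpace ENNReal

noncomputable section

lemma J_lt_top (d : ℕ) (hd : 2 ≤ d) :
    ∫⁻ z in closedBall (0 : Euc d) 5, ENNReal.ofReal (‖z‖ ^ (-((d:ℝ)-1))) ∂volume < ∞ := by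
  set s : ℝ := (d:ℝ) - 1 with hs_def
  have hd2 : (2:ℝ) ≤ d := by exact_mod_cast hd
  have hs_pos : 0 < s := by simp only [hs_def]; linarith
  have hsd : s < d := by simp only [hs_def]; linarith
  have hfr : finrank ℝ (Euc d) = d := finrank_euclideanSpace_fin
  set μ : Measure (Euc d) := volume.restrict (closedBall (0 : Euc d) 5) with hμ
  have h_meas : Measurable fun z : Euc d => ‖z‖ ^ (-s) := by fun_prop
  have h_pos : ∀ z : Euc d, 0 ≤ ‖z‖ ^ (-s) := fun z => Real.rpow_nonneg (norm_nonneg z) _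
  rw [show (∫⁻ z in closedBall (0 : Euc d) 5, ENNReal.ofReal (‖z‖ ^ (-s)) ∂volume)
      = ∫⁻ z, ENNReal.ofReal (‖z‖ ^ (-s)) ∂μ from rfl,
    lintegral_eq_lintegral_meas_le μ (Filter.Eventually.of_forall h_pos) h_meas.aemeasurable]
  have hμfin : μ univ < ∞ := by
    rw [hμ, Measure.restrict_apply_univ]
    exact measure_closedBall_lt_top
  calc
    ∫⁻ t in Ioi 0, μ {a | t ≤ ‖a‖ ^ (-s)}
        ≤ ∫⁻ t in Ioc 0 1 ∪ Ioi 1, μ {a | t ≤ ‖a‖ ^ (-s)} :=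
          lintegral_mono_set Ioi_subset_Ioc_union_Ioi
    _ ≤ (∫⁻ t in Ioc 0 1, μ {a | t ≤ ‖a‖ ^ (-s)}) + ∫⁻ t in Ioi 1, μ {a | t ≤ ‖a‖ ^ (-s)} :=
          lintegral_union_le _ _ _
    _ < ∞ := ENNReal.add_lt_top.2 ⟨?_, ?_⟩
  · calc
      ∫⁻ t in Ioc 0 1, μ {a | t ≤ ‖a‖ ^ (-s)} ≤ ∫⁻ _ in Ioc (0:ℝ) 1, μ univ :=
        lintegral_mono fun t => measure_mono (subset_univ _)
      _ = μ univ * volume (Ioc (0:ℝ) 1) := setLIntegral_const _ _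
      _ < ∞ := by
          apply ENNReal.mul_lt_top hμfin
          simp [Real.volume_Ioc]
  · have hsub : ∀ t ∈ Ioi (1:ℝ), μ {a | t ≤ ‖a‖ ^ (-s)}
        ≤ ENNReal.ofReal (t ^ (-(1/s) * d)) * volume (ball (0 : Euc d) 1) := by
      intro t ht
      have ht1 : (1:ℝ) < t := ht
      have ht0 : (0:ℝ) < t := lt_trans one_pos ht1
      have hkey : {a : Euc d | t ≤ ‖a‖ ^ (-s)} ⊆ closedBall (0 : Euc d) (t ^ (-(1/s))) := by
        intro a ha
        simp only [mem_setOf_eq] at ha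
        have hna : 0 < ‖a‖ := by
          rcases eq_or_lt_of_le (norm_nonneg a) with h | h
          · exfalso
            rw [← h, Real.zero_rpow (neg_ne_zero.2 hs_pos.ne')] at ha
            linarith
          · exact h
        rw [mem_closedBall_zero_iff]
        have h2 : (‖a‖ ^ (-s)) ^ (-(1/s)) ≤ t ^ (-(1/s)) :=
          Real.rpow_le_rpow_of_nonpos ht0 ha (neg_nonpos.2 (by positivity))
        have h3 : (‖a‖ ^ (-s)) ^ (-(1/s)) = ‖a‖ := by
          rw [← Real.rpow_mul hna.le,
            show (-s) * (-(1/s)) = 1 by field_simp, Real.rpow_one]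
        rwa [h3] at h2
      calc
        μ {a | t ≤ ‖a‖ ^ (-s)} ≤ volume {a : Euc d | t ≤ ‖a‖ ^ (-s)} :=
          Measure.restrict_le_self _
        _ ≤ volume (closedBall (0 : Euc d) (t ^ (-(1/s)))) := measure_mono hkey
        _ = ENNReal.ofReal ((t ^ (-(1/s))) ^ finrank ℝ (Euc d)) * volume (ball (0 : Euc d) 1) :=
          Measure.addHaar_closedBall _ _ (Real.rpow_nonneg ht0.le _)
        _ = ENNReal.ofReal (t ^ (-(1/s) * d)) * volume (ball (0 : Euc d) 1) := by
          rw [hfr, ← Real.rpow_natCast (t ^ (-(1/s))) d, ← Real.rpow_mul ht0.le]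
    calc
      ∫⁻ t in Ioi 1, μ {a | t ≤ ‖a‖ ^ (-s)}
          ≤ ∫⁻ t in Ioi 1, ENNReal.ofReal (t ^ (-(1/s) * d)) * volume (ball (0 : Euc d) 1) :=
            setLIntegral_mono' measurableSet_Ioi hsub
      _ = (∫⁻ t in Ioi 1, ENNReal.ofReal (t ^ (-(1/s) * d))) * volume (ball (0 : Euc d) 1) :=
            lintegral_mul_const' _ _ measure_ball_lt_top.ne
      _ < ∞ := by
          apply ENNReal.mul_lt_top _ measure_ball_lt_top
          have ha : -(1/s) * d < -1 := by
            rw [show -(1/s) * d = -((d:ℝ)/s) by ring, neg_lt_neg_iff]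
            exact (one_lt_div hs_pos).2 hsd
          exact (integrableOn_Ioi_rpow_of_lt ha one_pos).setLIntegral_lt_top

lemma scale_eq (d : ℕ) (hd : 2 ≤ d) {R : ℝ} (hR : 0 < R) :
    ∫⁻ z in closedBall (0 : Euc d) (5 * R), ENNReal.ofReal (‖z‖ ^ (-((d:ℝ)-1))) ∂volume =
      ENNReal.ofReal R *
        ∫⁻ z in closedBall (0 : Euc d) 5, ENNReal.ofReal (‖z‖ ^ (-((d:ℝ)-1))) ∂volume := by
  set s : ℝ := (d:ℝ) - 1 with hs_def
  have hfr : finrank ℝ (Euc d) = d := finrank_euclideanSpace_fin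
  have hmeas : Measurable fun z : Euc d => ENNReal.ofReal (‖z‖ ^ (-s)) := by fun_prop
  have hmap : Measure.map (fun y : Euc d => R • y) volume
      = ENNReal.ofReal |((R:ℝ) ^ finrank ℝ (Euc d))⁻¹| • (volume : Measure (Euc d)) := by
    simpa using Measure.map_addHaar_smul (volume : Measure (Euc d)) hR.ne'
  have hvol : (volume : Measure (Euc d))
      = ENNReal.ofReal (R ^ d) • Measure.map (fun y : Euc d => R • y) volume := by
    rw [hmap, hfr, smul_smul, ← ENNReal.ofReal_mul (by positivity), abs_of_pos (by positivity),
      mul_inv_cancel₀ (by positivity), ENNReal.ofReal_one, one_smul]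
  have hpre : (fun y : Euc d => R • y) ⁻¹' closedBall (0 : Euc d) (5 * R)
      = closedBall (0 : Euc d) 5 := by
    ext y
    simp only [mem_preimage, mem_closedBall_zero_iff, norm_smul, Real.norm_eq_abs,
      abs_of_pos hR]
    rw [mul_comm 5 R]
    exact mul_le_mul_iff_right₀ hR
  calc
    ∫⁻ z in closedBall (0 : Euc d) (5 * R), ENNReal.ofReal (‖z‖ ^ (-s)) ∂volume
        = ENNReal.ofReal (R ^ d) * ∫⁻ z in closedBall (0 : Euc d) (5 * R),
            ENNReal.ofReal (‖z‖ ^ (-s)) ∂(Measure.map (fun y : Euc d => R • y) volume) := by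
          conv_lhs => rw [hvol]
          simp [Measure.restrict_smul, lintegral_smul_measure]
    _ = ENNReal.ofReal (R ^ d) * ∫⁻ y in closedBall (0 : Euc d) 5,
            ENNReal.ofReal (‖R • y‖ ^ (-s)) ∂volume := by
          rw [setLIntegral_map measurableSet_closedBall hmeas (measurable_const_smul R), hpre]
    _ = ENNReal.ofReal (R ^ d) * ∫⁻ y in closedBall (0 : Euc d) 5,
            ENNReal.ofReal (R ^ (-s)) * ENNReal.ofReal (‖y‖ ^ (-s)) ∂volume := by
          congr 1
          refine lintegral_congr fun y => ?_
          rw [norm_smul, Real.norm_eq_abs, abs_of_pos hR,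
            Real.mul_rpow hR.le (norm_nonneg y),
            ENNReal.ofReal_mul (Real.rpow_nonneg hR.le _)]
    _ = ENNReal.ofReal (R ^ d) * (ENNReal.ofReal (R ^ (-s)) *
            ∫⁻ y in closedBall (0 : Euc d) 5, ENNReal.ofReal (‖y‖ ^ (-s)) ∂volume) := by
          rw [lintegral_const_mul' _ _ ENNReal.ofReal_ne_top]
    _ = ENNReal.ofReal R *
            ∫⁻ y in closedBall (0 : Euc d) 5, ENNReal.ofReal (‖y‖ ^ (-s)) ∂volume := by
          rw [← mul_assoc, ← ENNReal.ofReal_mul (by positivity)]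
          congr 2
          rw [← Real.rpow_natCast R d, ← Real.rpow_add hR]
          norm_num [hs_def]

/-- The singular integral `∫_{K(w)} |z|^{-(d-1)} dz` is bounded by `C_d |w|`. -/
theorem cone_singular_integral_bound (d : ℕ) (hd : 2 ≤ d) :
    ∃ C > (0:ℝ), ∀ w : Euc d, w ≠ 0 →
      ∫⁻ z in Kcone d w, ENNReal.ofReal (‖z‖ ^ (-((d : ℝ) - 1))) ∂volume ≤
        ENNReal.ofReal (C * ‖w‖) := by
  set J := ∫⁻ z in closedBall (0 : Euc d) 5, ENNReal.ofReal (‖z‖ ^ (-((d:ℝ)-1))) ∂volume with hJ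
  have hJfin : J < ∞ := J_lt_top d hd
  refine ⟨J.toReal + 1, by positivity, fun w hw => ?_⟩
  have hR : 0 < ‖w‖ := norm_pos_iff.2 hw
  have hsub : Kcone d w ⊆ closedBall (0 : Euc d) (5 * ‖w‖) := by
    rintro z ⟨θ, ⟨hθ0, hθ1⟩, h, _, hh, rfl⟩
    rw [mem_closedBall_zero_iff, norm_smul, Real.norm_eq_abs, abs_of_nonneg hθ0]
    calc
      θ * ‖w + (4 * (1 - θ)) • h‖ ≤ 1 * ‖w + (4 * (1 - θ)) • h‖ := by
        apply mul_le_mul_of_nonneg_right hθ1 (norm_nonneg _)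
      _ = ‖w + (4 * (1 - θ)) • h‖ := one_mul _
      _ ≤ ‖w‖ + ‖(4 * (1 - θ)) • h‖ := norm_add_le _ _
      _ ≤ ‖w‖ + 4 * ‖w‖ := by
          apply add_le_add le_rfl
          rw [norm_smul, Real.norm_eq_abs, abs_of_nonneg (by nlinarith)]
          nlinarith [norm_nonneg h]
      _ = 5 * ‖w‖ := by ring
  calc
    ∫⁻ z in Kcone d w, ENNReal.ofReal (‖z‖ ^ (-((d:ℝ)-1))) ∂volume
        ≤ ∫⁻ z in closedBall (0 : Euc d) (5 * ‖w‖),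
            ENNReal.ofReal (‖z‖ ^ (-((d:ℝ)-1))) ∂volume := lintegral_mono_set hsub
    _ = ENNReal.ofReal ‖w‖ * J := scale_eq d hd hR
    _ ≤ ENNReal.ofReal ‖w‖ * ENNReal.ofReal (J.toReal + 1) := by
        gcongr
        exact le_trans (le_of_eq (ENNReal.ofReal_toReal hJfin.ne).symm)
          (ENNReal.ofReal_le_ofReal (by linarith))
    _ = ENNReal.ofReal ((J.toReal + 1) * ‖w‖) := by
        rw [← ENNReal.ofReal_mul (norm_nonneg w), mul_comm]
end
end

section
/- Let φ : ℝ → ℝ be C² with φ'(y) ≥ 1/2 for all y and φ(0) = 0. Let x < 0 (so that φ(x) < 0) and set v = √(−2φ(x)) > 0. Let (X,V) be the solution of Ẋ = V, V̇ = −φ'(X) with X(0) = x, V(0) = v. Then t₀ := ∫_x^0 dy/√(−2φ(y)) is finite, V(t) > 0 and V(t)² + 2φ(X(t)) = 0 for all t ∈ [0,t₀), X is strictly increasing on [0,t₀], X(t₀) = 0, and V(t₀) = 0; that is, t₀ is the first time at which the velocity vanishes. -/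
open MeasureTheory Set

/-- One-dimensional Hamiltonian dynamics: for a `C²` potential `φ` with `φ' ≥ 1/2`,
`φ(0) = 0`, starting from `x < 0` with velocity `v = √(−2φ(x))`, the first time the
velocity vanishes is `t₀ = ∫_x^0 dy/√(−2φ(y))`: the energy `V² + 2φ(X)` stays `0`,
`V > 0` on `[0,t₀)`, `X` increases strictly up to `X(t₀) = 0`, and `V(t₀) = 0`. -/
theorem one_dimensional_turning_time (φ : ℝ → ℝ) (hφ : ContDiff ℝ 2 φ)
    (hφ' : ∀ y : ℝ, (1/2 : ℝ) ≤ deriv φ y) (hφ0 : φ 0 = 0)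
    (x : ℝ) (hx : x < 0) (X V : ℝ → ℝ)
    (hX0 : X 0 = x) (hV0 : V 0 = Real.sqrt (-2 * φ x))
    (hXd : ∀ t : ℝ, HasDerivAt X (V t) t)
    (hVd : ∀ t : ℝ, HasDerivAt V (-(deriv φ (X t))) t)
    (t₀ : ℝ) (ht₀ : t₀ = ∫ y in x..(0:ℝ), (Real.sqrt (-2 * φ y))⁻¹) :
    IntervalIntegrable (fun y => (Real.sqrt (-2 * φ y))⁻¹) volume x 0 ∧
    0 < V 0 ∧
    (∀ t ∈ Ico (0:ℝ) t₀, 0 < V t ∧ V t ^ 2 + 2 * φ (X t) = 0) ∧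
    StrictMonoOn X (Icc 0 t₀) ∧
    X t₀ = 0 ∧ V t₀ = 0 := by
  -- basic facts about φ
  have hφdiff : Differentiable ℝ φ := hφ.differentiable (by norm_num)
  have hφc : Continuous φ := hφdiff.continuous
  have hmono : StrictMono φ := strictMono_of_deriv_pos fun y =>
    lt_of_lt_of_le (by norm_num) (hφ' y)
  have hφneg : ∀ y : ℝ, y < 0 → φ y < 0 := fun y hy => hφ0 ▸ hmono hy
  have hφx : φ x < 0 := hφneg x hx
  have hbound : ∀ y : ℝ, y ≤ 0 → -y ≤ -2 * φ y := by
    intro y hy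
    have := mul_sub_le_image_sub_of_le_deriv hφdiff hφ' hy
    rw [hφ0] at this; linarith
  have hle0 : ∀ y : ℝ, φ y ≤ 0 → y ≤ 0 := by
    intro y hy
    by_contra h
    exact absurd (hφ0 ▸ hmono (not_le.1 h)) (not_lt.2 hy)
  -- continuity of X and V
  have hXc : Continuous X := continuous_iff_continuousAt.2 fun t => (hXd t).continuousAt
  have hVc : Continuous V := continuous_iff_continuousAt.2 fun t => (hVd t).continuousAt
  -- energy conservation
  have energy : ∀ t : ℝ, V t ^ 2 + 2 * φ (X t) = 0 := by
    have hE : ∀ t : ℝ, HasDerivAt (fun s => V s ^ 2 + 2 * φ (X s)) 0 t := by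
      intro t
      have h1 : HasDerivAt (fun s => V s ^ 2) (2 * V t * (-(deriv φ (X t)))) t := by
        simpa [mul_comm] using (hVd t).fun_pow 2
      have h2 : HasDerivAt (fun s => φ (X s)) (deriv φ (X t) * V t) t :=
        (hφdiff (X t)).hasDerivAt.comp t (hXd t)
      have h3 := h1.add (h2.const_mul 2)
      have : 2 * V t * -deriv φ (X t) + 2 * (deriv φ (X t) * V t) = 0 := by ring
      rwa [this] at h3
    intro t
    have hconst := is_const_of_deriv_eq_zero (𝕜 := ℝ)
      (f := fun s => V s ^ 2 + 2 * φ (X s))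
      (fun s => (hE s).differentiableAt) (fun s => (hE s).deriv) t 0
    rw [hconst, hX0, hV0, Real.sq_sqrt (by linarith)]
    ring
  have hXle : ∀ s : ℝ, X s ≤ 0 := by
    intro s
    refine hle0 _ ?_
    nlinarith [energy s, sq_nonneg (V s)]
  -- integrability
  have hInt : IntervalIntegrable (fun y => (Real.sqrt (-2 * φ y))⁻¹) volume x 0 := by
    have hg : IntervalIntegrable (fun y : ℝ => (0 - y) ^ (-(2⁻¹ : ℝ))) volume x 0 := by
      have h0 : IntervalIntegrable (fun z : ℝ => z ^ (-(2⁻¹ : ℝ))) volume 0 (-x) :=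
        intervalIntegral.intervalIntegrable_rpow' (by norm_num)
      simpa using (h0.comp_sub_left 0).symm
    have hmeas : AEStronglyMeasurable (fun y => (Real.sqrt (-2 * φ y))⁻¹)
        (volume.restrict (Set.uIoc x 0)) :=
      ((Real.continuous_sqrt.comp
        ((continuous_const.mul hφc))).measurable.inv).aestronglyMeasurable
    refine hg.mono_fun hmeas ?_
    rw [uIoc_of_le hx.le]
    refine (ae_restrict_iff' measurableSet_Ioc).2 (Filter.Eventually.of_forall fun y hy => ?_)
    simp only [Real.norm_eq_abs]
    rcases hy.2.lt_or_eq with hneg | h0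
    case inr =>
      subst h0
      simp [hφ0]
    case inl =>
      have h1 : (0:ℝ) < -y := by linarith
      have h2 : Real.sqrt (-y) ≤ Real.sqrt (-2 * φ y) := Real.sqrt_le_sqrt (hbound y hy.2)
      have h3 : (0:ℝ) < Real.sqrt (-y) := Real.sqrt_pos.2 h1
      have h4 : (Real.sqrt (-2 * φ y))⁻¹ ≤ (Real.sqrt (-y))⁻¹ := inv_anti₀ h3 h2
      have h5 : (0 - y) ^ (-(2⁻¹ : ℝ)) = (Real.sqrt (-y))⁻¹ := by
        rw [Real.rpow_neg (by linarith), zero_sub, Real.sqrt_eq_rpow]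
        norm_num
      rw [h5, abs_of_nonneg (by positivity), abs_of_nonneg (by positivity)]
      exact h4
  -- the substitution identity
  have key : ∀ t : ℝ, 0 ≤ t → (∀ s ∈ Icc (0:ℝ) t, 0 < V s) →
      (∫ y in x..X t, (Real.sqrt (-2 * φ y))⁻¹) = t := by
    intro t ht hV
    have hXneg : ∀ s ∈ Icc (0:ℝ) t, X s < 0 := by
      intro s hs
      rcases (hXle s).lt_or_eq with h | h
      · exact h
      · exfalso
        have := energy s
        rw [h, hφ0] at this
        nlinarith [hV s hs]
    have himg : ContinuousOn (fun y => (Real.sqrt (-2 * φ y))⁻¹) (X '' uIcc 0 t) := by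
      intro y hy
      obtain ⟨s, hs, rfl⟩ := hy
      rw [uIcc_of_le ht] at hs
      have h1 : (0:ℝ) < -2 * φ (X s) := by nlinarith [hφneg _ (hXneg s hs)]
      refine ContinuousAt.continuousWithinAt ?_
      exact (Real.continuous_sqrt.comp (continuous_const.mul hφc)).continuousAt.inv₀
        (ne_of_gt (Real.sqrt_pos.2 h1))
    have hsub := intervalIntegral.integral_comp_smul_deriv' (a := 0) (b := t)
      (f := X) (f' := V) (g := fun y => (Real.sqrt (-2 * φ y))⁻¹)
      (fun s _ => hXd s) hVc.continuousOn himg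
    rw [hX0] at hsub
    rw [← hsub]
    have heq : EqOn (fun s => V s • ((fun y => (Real.sqrt (-2 * φ y))⁻¹) ∘ X) s)
        (fun _ => (1:ℝ)) (uIcc 0 t) := by
      intro s hs
      rw [uIcc_of_le ht] at hs
      have h1 : -2 * φ (X s) = V s ^ 2 := by linarith [energy s]
      simp only [smul_eq_mul, Function.comp_apply]
      rw [h1, Real.sqrt_sq (hV s hs).le, mul_inv_cancel₀ (hV s hs).ne']
    rw [intervalIntegral.integral_congr heq]
    simp
  -- positivity of integrand gives t ≤ t₀ whenever V > 0 on [0, t]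
  have hbnd : ∀ t : ℝ, 0 ≤ t → (∀ s ∈ Icc (0:ℝ) t, 0 < V s) → t ≤ t₀ := by
    intro t ht hV
    have hXmono : MonotoneOn X (Icc 0 t) := by
      refine monotoneOn_of_deriv_nonneg (convex_Icc _ _) hXc.continuousOn
        (fun s _ => (hXd s).differentiableAt.differentiableWithinAt) ?_
      intro s hs
      rw [interior_Icc] at hs
      rw [(hXd s).deriv]
      exact (hV s ⟨hs.1.le, hs.2.le⟩).le
    have hxXt : x ≤ X t := by
      rw [← hX0]
      exact hXmono ⟨le_rfl, ht⟩ ⟨ht, le_rfl⟩ ht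
    have h1 : IntervalIntegrable (fun y => (Real.sqrt (-2 * φ y))⁻¹) volume x (X t) :=
      hInt.mono_set (uIcc_subset_uIcc_iff_le.2 (by
        simp [min_def, max_def, hx.le, hXle t, hxXt] <;> split_ifs <;> linarith [hXle t]))
    have h2 : IntervalIntegrable (fun y => (Real.sqrt (-2 * φ y))⁻¹) volume (X t) 0 :=
      hInt.mono_set (uIcc_subset_uIcc_iff_le.2 (by
        simp [min_def, max_def, hx.le, hXle t, hxXt] <;> split_ifs <;> linarith [hXle t]))
    have hsplit := intervalIntegral.integral_add_adjacent_intervals h1 h2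
    have hnn : 0 ≤ ∫ y in (X t)..(0:ℝ), (Real.sqrt (-2 * φ y))⁻¹ :=
      intervalIntegral.integral_nonneg (hXle t)
        (fun y _ => inv_nonneg.2 (Real.sqrt_nonneg _))
    have hkey := key t ht hV
    rw [ht₀, ← hsplit, hkey]
    linarith
  -- the set of times where the velocity is ≤ 0
  set S : Set ℝ := {t : ℝ | 0 ≤ t ∧ V t ≤ 0} with hS
  have hSclosed : IsClosed S := by
    have : S = {t : ℝ | 0 ≤ t} ∩ {t : ℝ | V t ≤ 0} := rfl
    rw [this]
    exact (isClosed_le continuous_const continuous_id).inter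
      (isClosed_le hVc continuous_const)
  have hV0pos : 0 < V 0 := by
    rw [hV0]
    exact Real.sqrt_pos.2 (by linarith)
  have hSne : S.Nonempty := by
    by_contra h
    rw [not_nonempty_iff_eq_empty] at h
    have hVpos : ∀ s : ℝ, 0 ≤ s → 0 < V s := by
      intro s hs
      by_contra hv
      have hmem : s ∈ S := ⟨hs, not_lt.1 hv⟩
      rw [h] at hmem
      exact hmem
    have := hbnd (max t₀ 0 + 1) (by positivity)
      (fun s hs => hVpos s hs.1)
    have h2 : t₀ ≤ max t₀ 0 := le_max_left _ _
    linarith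
  have hSbdd : BddBelow S := ⟨0, fun s hs => hs.1⟩
  set T : ℝ := sInf S with hT
  have hTS : T ∈ S := hSclosed.csInf_mem hSne hSbdd
  have hTnonneg : 0 ≤ T := hTS.1
  have hTpos : 0 < T := by
    rcases hTnonneg.lt_or_eq with h | h
    · exact h
    · exfalso
      have := hTS.2
      rw [← h] at this
      linarith
  have hVpos : ∀ t ∈ Ico (0:ℝ) T, 0 < V t := by
    intro t ht
    by_contra hv
    have : t ∈ S := ⟨ht.1, not_lt.1 hv⟩
    exact absurd (csInf_le hSbdd this) (not_le.2 ht.2)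
  have hVT : V T = 0 := by
    refine le_antisymm hTS.2 ?_
    have hne : (nhdsWithin T (Ico 0 T)).NeBot := by
      rw [mem_closure_iff_nhdsWithin_neBot.symm, closure_Ico hTpos.ne]
      exact right_mem_Icc.2 hTpos.le
    haveI := hne
    refine ge_of_tendsto ((hVc.continuousAt.continuousWithinAt (s := Ico 0 T)).tendsto) ?_
    exact Filter.eventually_of_mem self_mem_nhdsWithin fun s hs => (hVpos s hs).le
  have hXT : X T = 0 := by
    have h1 := energy T
    rw [hVT] at h1
    have : φ (X T) = 0 := by linarith
    have := hmono.injective (this.trans hφ0.symm)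
    exact this
  -- monotonicity of X on [0, T]
  have hXsm : StrictMonoOn X (Icc 0 T) := by
    refine strictMonoOn_of_deriv_pos (convex_Icc _ _) hXc.continuousOn ?_
    intro s hs
    rw [interior_Icc] at hs
    rw [(hXd s).deriv]
    exact hVpos s ⟨hs.1.le, hs.2⟩
  have hXmono : MonotoneOn X (Icc 0 T) := hXsm.monotoneOn
  -- T = t₀ via the limit of the substitution identity
  have hTt₀ : T = t₀ := by
    have hmaps : MapsTo X (Icc 0 T) (Icc x 0) := by
      intro s hs
      exact ⟨hX0 ▸ hXmono (left_mem_Icc.2 hTnonneg) hs hs.1, hXle s⟩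
    have hGcont : ContinuousOn (fun u => ∫ y in x..u, (Real.sqrt (-2 * φ y))⁻¹)
        (Icc x 0) := by
      have := intervalIntegral.continuousOn_primitive_interval' hInt
        (left_mem_uIcc (a := x) (b := 0))
      rwa [uIcc_of_le hx.le] at this
    have hGX : ContinuousWithinAt
        (fun t => ∫ y in x..(X t), (Real.sqrt (-2 * φ y))⁻¹) (Icc 0 T) T :=
      (hGcont.comp hXc.continuousOn hmaps) T (right_mem_Icc.2 hTnonneg)
    have hne : (nhdsWithin T (Ico 0 T)).NeBot := by
      rw [mem_closure_iff_nhdsWithin_neBot.symm, closure_Ico hTpos.ne]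
      exact right_mem_Icc.2 hTpos.le
    have h1 : Filter.Tendsto (fun t => ∫ y in x..(X t), (Real.sqrt (-2 * φ y))⁻¹)
        (nhdsWithin T (Ico 0 T)) (nhds t₀) := by
      have := hGX.tendsto.mono_left (nhdsWithin_mono T Ico_subset_Icc_self)
      rwa [hXT, ← ht₀] at this
    have h2 : Filter.Tendsto (fun t => ∫ y in x..(X t), (Real.sqrt (-2 * φ y))⁻¹)
        (nhdsWithin T (Ico 0 T)) (nhds T) := by
      have hid : Filter.Tendsto (fun t : ℝ => t) (nhdsWithin T (Ico 0 T)) (nhds T) :=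
        Filter.tendsto_id.mono_right nhdsWithin_le_nhds
      refine hid.congr' ?_
      refine Filter.eventually_of_mem self_mem_nhdsWithin fun s hs => ?_
      exact (key s hs.1 (fun u hu => hVpos u ⟨hu.1, lt_of_le_of_lt hu.2 hs.2⟩)).symm
    exact (tendsto_nhds_unique h2 h1)
  refine ⟨hInt, hV0pos, ?_, ?_, ?_, ?_⟩
  · intro t ht
    rw [← hTt₀] at ht
    exact ⟨hVpos t ht, energy t⟩
  · rw [← hTt₀]; exact hXsm
  · rw [← hTt₀]; exact hXT
  · rw [← hTt₀]; exact hVT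
end
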